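/- Let g, h ∈ ℂ⟦Y⟧ be formal power series with zero constant term and g ≠ h, and regard them as elements G, H of the two-variable formal power series ring ℂ⟦X,Y⟧ depending only on Y. Then the quotient ring ℂ⟦X,Y⟧/(X + G, X + H) by the ideal generated by X + G and X + H is a finite-dimensional ℂ-vector space, and its dimension equals the order of vanishing of g − h (the least degree with nonzero coefficient of g − h). -/

import Mathlib

set_option maxHeartbeats 1000000
set_option synthInstance.maxHeartbeats 400000

noncomputable section

open PowerSeries Finset

/-- A one-variable power series `g ∈ ℂ⟦Y⟧` regarded as an element of the two-variable
power series ring `ℂ⟦X,Y⟧` depending only on `Y` (variable `0` is `X`, variable `1` is `Y`). -/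
def toTwoVars (g : PowerSeries ℂ) : MvPowerSeries (Fin 2) ℂ :=
  fun d => if d 0 = 0 then PowerSeries.coeff (d 1) g else 0

/-- pack a pair of naturals into `Fin 2 →₀ ℕ` -/
def fs (a b : ℕ) : Fin 2 →₀ ℕ := Finsupp.single 0 a + Finsupp.single 1 b

@[simp] lemma fs_apply0 (a b : ℕ) : fs a b 0 = a := by simp [fs]
@[simp] lemma fs_apply1 (a b : ℕ) : fs a b 1 = b := by simp [fs]

lemma fs_eq (d : Fin 2 →₀ ℕ) : fs (d 0) (d 1) = d := by
  ext i
  fin_cases i <;> simp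

lemma fs_add (a b a' b' : ℕ) : fs a b + fs a' b' = fs (a + a') (b + b') := by
  ext i; fin_cases i <;> simp

lemma fs_zero : fs 0 0 = 0 := by ext i; fin_cases i <;> simp

lemma fs_inj {a b a' b' : ℕ} (h : fs a b = fs a' b') : a = a' ∧ b = b' := by
  constructor
  · have := congrArg (fun d => d 0) h; simpa using this
  · have := congrArg (fun d => d 1) h; simpa using this

/-- The "curry" algebra equivalence `ℂ⟦X,Y⟧ ≃ ℂ⟦Y⟧⟦X⟧`. -/
def Phi : MvPowerSeries (Fin 2) ℂ ≃ₐ[ℂ] PowerSeries (PowerSeries ℂ) where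
  toFun F := PowerSeries.mk fun a => PowerSeries.mk fun b => F (fs a b)
  invFun G := fun d => PowerSeries.coeff (R := ℂ) (d 1) (PowerSeries.coeff (R := PowerSeries ℂ) (d 0) G)
  left_inv F := by
    funext d
    show PowerSeries.coeff (R := ℂ) (d 1) (PowerSeries.coeff (d 0) _) = F d
    simp [fs_eq]
  right_inv G := by
    ext a b
    simp
  map_add' F G := by
    ext a b
    simp
    rfl
  map_mul' F G := by
    ext a b
    rw [PowerSeries.coeff_mul]
    simp only [map_sum, PowerSeries.coeff_mul, coeff_mk]
    rw [Finset.sum_sigma']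
    show (MvPowerSeries.coeff (R := ℂ) (fs a b)) (F * G) = _
    rw [MvPowerSeries.coeff_mul]
    apply Finset.sum_nbij' (i := fun r => ⟨(r.1 0, r.2 0), (r.1 1, r.2 1)⟩)
      (j := fun p => (fs p.1.1 p.2.1, fs p.1.2 p.2.2))
    · intro r hr
      rw [Finset.HasAntidiagonal.mem_antidiagonal] at hr
      simp only [Finset.mem_sigma, Finset.HasAntidiagonal.mem_antidiagonal]
      constructor
      · have := congrArg (fun d => d 0) hr; simpa using this
      · have := congrArg (fun d => d 1) hr; simpa using this
    · intro p hp
      simp only [Finset.mem_sigma, Finset.HasAntidiagonal.mem_antidiagonal] at hp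
      rw [Finset.HasAntidiagonal.mem_antidiagonal, fs_add, hp.1, hp.2]
    · intro r hr
      rw [Finset.HasAntidiagonal.mem_antidiagonal] at hr
      simp [fs_eq]
    · intro p hp
      simp
    · intro r hr
      simp [MvPowerSeries.coeff_apply, fs_eq]
  commutes' c := by
    ext a b
    show PowerSeries.coeff (R := ℂ) b (PowerSeries.coeff a _) = _
    simp only [coeff_mk]
    rw [show (algebraMap ℂ (MvPowerSeries (Fin 2) ℂ)) c = MvPowerSeries.C (σ := Fin 2) (R := ℂ) c from rfl]
    rw [show (MvPowerSeries.C (σ := Fin 2) (R := ℂ) c) (fs a b)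
        = MvPowerSeries.coeff (R := ℂ) (fs a b) (MvPowerSeries.C (σ := Fin 2) (R := ℂ) c) from rfl]
    rw [MvPowerSeries.coeff_C, PowerSeries.algebraMap_apply, PowerSeries.coeff_C]
    have hfs : fs a b = 0 ↔ (a = 0 ∧ b = 0) := by
      constructor
      · intro h
        rw [← fs_zero] at h
        exact fs_inj h
      · rintro ⟨rfl, rfl⟩
        exact fs_zero
    rw [PowerSeries.algebraMap_apply]
    simp only [hfs, apply_ite (PowerSeries.coeff (R := ℂ) b), PowerSeries.coeff_C, map_zero]
    split_ifs <;> tauto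

abbrev A := PowerSeries ℂ
abbrev B := PowerSeries A

variable (g : A)

/-- evaluation of `F ∈ A⟦X⟧` at `X = -g` -/
def sig (F : B) : A :=
  PowerSeries.mk fun m => ∑ a ∈ range (m + 1),
    PowerSeries.coeff (R := ℂ) m (PowerSeries.coeff (R := A) a F * (-g) ^ a)

variable (hg : constantCoeff (R := ℂ) g = 0)
include hg

lemma van (v : A) {m a : ℕ} (h : m < a) : PowerSeries.coeff (R := ℂ) m (v * (-g) ^ a) = 0 := by
  have hX : (X : A) ∣ (-g) := by
    rw [X_dvd_iff]; simp [hg]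
  have : (X : A) ^ a ∣ v * (-g) ^ a := Dvd.dvd.mul_left (pow_dvd_pow_of_dvd hX a) v
  exact (X_pow_dvd_iff.mp this) m h

omit hg in
lemma coeff_sig (F : B) (m : ℕ) :
    PowerSeries.coeff (R := ℂ) m (sig g F)
      = ∑ a ∈ range (m + 1), PowerSeries.coeff (R := ℂ) m (PowerSeries.coeff (R := A) a F * (-g) ^ a) := by
  simp [sig]

lemma coeff_mul_sig (v : A) (F : B) (m : ℕ) :
    PowerSeries.coeff (R := ℂ) m (v * sig g F)
      = ∑ a ∈ range (m + 1),
          PowerSeries.coeff (R := ℂ) m (v * (PowerSeries.coeff (R := A) a F * (-g) ^ a)) := by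
  rw [PowerSeries.coeff_mul]
  have step : ∀ p ∈ antidiagonal m,
      PowerSeries.coeff (R := ℂ) p.1 v * PowerSeries.coeff (R := ℂ) p.2 (sig g F)
        = ∑ a ∈ range (m + 1),
            PowerSeries.coeff (R := ℂ) p.1 v
              * PowerSeries.coeff (R := ℂ) p.2 (PowerSeries.coeff (R := A) a F * (-g) ^ a) := by
    intro p hp
    rw [Finset.HasAntidiagonal.mem_antidiagonal] at hp
    rw [coeff_sig g, Finset.mul_sum]
    apply Finset.sum_subset
    · apply Finset.range_subset_range.2
      omega
    · intro a _ ha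
      rw [Finset.mem_range, not_lt] at ha
      rw [van g hg _ (by omega), mul_zero]
  rw [Finset.sum_congr rfl step, Finset.sum_comm]
  refine Finset.sum_congr rfl fun a _ => ?_
  rw [PowerSeries.coeff_mul]

omit hg in
lemma sig_add (F G : B) : sig g (F + G) = sig g F + sig g G := by
  ext m
  simp only [coeff_sig, map_add, add_mul, Finset.sum_add_distrib]

omit hg in
lemma sig_C (v : A) : sig g (PowerSeries.C (R := A) v) = v := by
  ext m
  rw [coeff_sig]
  rw [Finset.sum_eq_single_of_mem 0 (Finset.mem_range.2 (Nat.succ_pos m))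
    (fun a _ ha => by simp [PowerSeries.coeff_C, ha])]
  simp

lemma sig_C_mul (v : A) (F : B) : sig g (PowerSeries.C (R := A) v * F) = v * sig g F := by
  ext m
  rw [coeff_sig, coeff_mul_sig g hg]
  refine Finset.sum_congr rfl fun a _ => ?_
  rw [PowerSeries.coeff_C_mul, mul_assoc]

omit hg in
lemma sig_smul (c : ℂ) (F : B) : sig g (c • F) = c • sig g F := by
  ext m
  simp only [coeff_sig, LinearMap.map_smul_of_tower, smul_mul_assoc, map_smul,
    smul_eq_mul, Finset.mul_sum]

lemma sig_X_mul (F : B) : sig g (X * F) = (-g) * sig g F := by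
  ext m
  rw [coeff_sig, coeff_mul_sig g hg]
  have L : ∑ a ∈ range (m+1), PowerSeries.coeff (R := ℂ) m (PowerSeries.coeff (R := A) a (X*F) * (-g)^a)
      = ∑ k ∈ range m, PowerSeries.coeff (R := ℂ) m (PowerSeries.coeff (R := A) k F * (-g)^(k+1)) := by
    rw [Finset.sum_range_succ']
    simp [coeff_succ_X_mul, coeff_zero_X_mul]
  have R : ∑ a ∈ range (m+1), PowerSeries.coeff (R := ℂ) m (-g * (PowerSeries.coeff (R := A) a F * (-g)^a))
      = ∑ k ∈ range m, PowerSeries.coeff (R := ℂ) m (PowerSeries.coeff (R := A) k F * (-g)^(k+1)) := by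
    have e : ∀ a : ℕ, -g * (PowerSeries.coeff (R := A) a F * (-g)^a)
        = PowerSeries.coeff (R := A) a F * (-g)^(a+1) := fun a => by ring
    simp only [e]
    rw [Finset.sum_range_succ, van g hg _ (Nat.lt_succ_self m), add_zero]
  rw [L, R]

/-- the tail shift: `shf k F = ∑_j F_{k+j} X^j`. -/
def shf (k : ℕ) (F : B) : B := PowerSeries.mk fun j => PowerSeries.coeff (R := A) (k + j) F

omit hg in
lemma shf_zero (F : B) : shf 0 F = F := by
  ext j
  simp [shf]

lemma sig_shf (k : ℕ) (F : B) :
    sig g (shf k F) = PowerSeries.coeff (R := A) k F + (-g) * sig g (shf (k + 1) F) := by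
  ext m
  rw [coeff_sig, map_add, coeff_mul_sig g hg]
  have L : ∑ a ∈ range (m+1),
        PowerSeries.coeff (R := ℂ) m (PowerSeries.coeff (R := A) a (shf k F) * (-g)^a)
      = PowerSeries.coeff (R := ℂ) m (PowerSeries.coeff (R := A) k F)
        + ∑ j ∈ range m,
            PowerSeries.coeff (R := ℂ) m (PowerSeries.coeff (R := A) (k+1+j) F * (-g)^(j+1)) := by
    rw [Finset.sum_range_succ']
    simp only [shf, coeff_mk, pow_zero, mul_one, add_zero]
    rw [add_comm]
    congr 1
    refine Finset.sum_congr rfl fun j _ => ?_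
    rw [show k + (j+1) = k+1+j by omega]
  have R : ∑ a ∈ range (m+1),
        PowerSeries.coeff (R := ℂ) m (-g * (PowerSeries.coeff (R := A) a (shf (k+1) F) * (-g)^a))
      = ∑ j ∈ range m,
          PowerSeries.coeff (R := ℂ) m (PowerSeries.coeff (R := A) (k+1+j) F * (-g)^(j+1)) := by
    have e : ∀ a : ℕ, -g * (PowerSeries.coeff (R := A) a (shf (k+1) F) * (-g)^a)
        = PowerSeries.coeff (R := A) a (shf (k+1) F) * (-g)^(a+1) := fun a => by ring
    simp only [e]
    rw [Finset.sum_range_succ, van g hg _ (Nat.lt_succ_self m), add_zero]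
    refine Finset.sum_congr rfl fun j _ => ?_
    simp [shf]
  rw [L, R]

/-- quotient in division of `F` by `X + C g` -/
def Qg (F : B) : B := PowerSeries.mk fun i => sig g (shf (i + 1) F)

lemma div_id (F : B) :
    F - PowerSeries.C (R := A) (sig g F) = (X + PowerSeries.C (R := A) g) * Qg g F := by
  refine PowerSeries.ext fun a => ?_
  rw [add_mul]
  rw [map_sub, map_add, PowerSeries.coeff_C_mul, PowerSeries.coeff_C]
  have key : ∀ k, g * sig g (shf (k + 1) F)
      = PowerSeries.coeff (R := A) k F - sig g (shf k F) := by
    intro k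
    have h := sig_shf g hg k F
    linear_combination h
  cases a with
  | zero =>
    rw [coeff_zero_X_mul, zero_add, if_pos rfl]
    rw [show PowerSeries.coeff (R := A) 0 (Qg g F) = sig g (shf 1 F) from coeff_mk 0 _]
    rw [key 0, shf_zero]
  | succ n =>
    rw [coeff_succ_X_mul, if_neg (Nat.succ_ne_zero n), sub_zero]
    rw [show PowerSeries.coeff (R := A) (n+1) (Qg g F) = sig g (shf (n+2) F) from coeff_mk (n+1) _]
    rw [show PowerSeries.coeff (R := A) n (Qg g F) = sig g (shf (n+1) F) from coeff_mk n _]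
    rw [key (n+1)]
    ring

section Main

variable (h : A) (hh : constantCoeff (R := ℂ) h = 0) (hgh : g ≠ h)

/-- the ideal `(X + g, X + h)` in `ℂ⟦Y⟧⟦X⟧` -/
def Jgh : Ideal B := Ideal.span {X + PowerSeries.C (R := A) g, X + PowerSeries.C (R := A) h}

/-- the coefficient-extraction linear map -/
def piMap (n : ℕ) : B →ₗ[ℂ] (Fin n → ℂ) where
  toFun F := fun k => PowerSeries.coeff (R := ℂ) k (sig g F)
  map_add' F G := by funext k; simp [sig_add]
  map_smul' c F := by funext k; simp [sig_smul]

include hh hgh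

lemma main (n : ℕ) (hn : (g - h).order = n) :
    ∃ E : (B ⧸ Jgh g h) ≃ₗ[ℂ] (Fin n → ℂ), True := by
  set f : A := g - h with hf
  have hf0 : f ≠ 0 := sub_ne_zero.mpr hgh
  have hcn : PowerSeries.coeff (R := ℂ) n f ≠ 0 := (order_eq_nat.1 hn).1
  have hXnf : (X : A) ^ n ∣ f := by
    rw [X_pow_dvd_iff]
    intro m hm
    exact coeff_of_lt_order m (by rw [hn]; exact_mod_cast hm)
  obtain ⟨u, huf⟩ := id hXnf
  have hu0 : constantCoeff (R := ℂ) u ≠ 0 := by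
    intro h0
    apply hcn
    rw [huf]
    simpa [coeff_zero_eq_constantCoeff_apply, h0] using PowerSeries.coeff_X_pow_mul u n 0
  have huu : IsUnit u := isUnit_iff_constantCoeff.mpr (isUnit_iff_ne_zero.mpr hu0)
  have hfXn : f ∣ (X : A) ^ n := by
    obtain ⟨U, hU⟩ := huu
    refine ⟨(↑U⁻¹ : A), ?_⟩
    rw [huf, ← hU, mul_assoc, Units.mul_inv, mul_one]
  -- kernel identification
  have hker : LinearMap.ker (piMap g n) = (Jgh g h).restrictScalars ℂ := by
    ext F
    rw [LinearMap.mem_ker, Submodule.restrictScalars_mem]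
    constructor
    · intro hF
      have hcoeff : ∀ k : ℕ, k < n → PowerSeries.coeff (R := ℂ) k (sig g F) = 0 := by
        intro k hk
        have := congrFun hF ⟨k, hk⟩
        simpa [piMap] using this
      have hXn : (X : A) ^ n ∣ sig g F := X_pow_dvd_iff.mpr hcoeff
      obtain ⟨t, ht⟩ := hfXn.trans hXn
      have h1 : F - PowerSeries.C (R := A) (sig g F) ∈ Jgh g h := by
        rw [div_id g hg]
        exact Ideal.mul_mem_right _ _ (Ideal.subset_span (by simp))
      have h2 : PowerSeries.C (R := A) (sig g F) ∈ Jgh g h := by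
        rw [ht, map_mul]
        have hCf : PowerSeries.C (R := A) f ∈ Jgh g h := by
          rw [hf, map_sub]
          have := sub_mem (Ideal.subset_span (show X + PowerSeries.C (R := A) g ∈ _ by simp))
            (Ideal.subset_span (show X + PowerSeries.C (R := A) h ∈ ({X + PowerSeries.C (R := A) g,
              X + PowerSeries.C (R := A) h} : Set B) by simp))
          simpa [Jgh] using this
        exact Ideal.mul_mem_right _ _ hCf
      simpa using add_mem h1 h2
    · intro hF
      obtain ⟨r, s, hrs⟩ := Ideal.mem_span_pair.mp hF
      funext k
      show PowerSeries.coeff (R := ℂ) (k : ℕ) (sig g F) = 0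
      have h1 : sig g (r * (X + PowerSeries.C (R := A) g)) = 0 := by
        have : r * (X + PowerSeries.C (R := A) g)
            = X * r + PowerSeries.C (R := A) g * r := by ring
        rw [this, sig_add, sig_X_mul g hg, sig_C_mul g hg]
        ring
      have h2 : sig g (s * (X + PowerSeries.C (R := A) h)) = -(f * sig g s) := by
        have : s * (X + PowerSeries.C (R := A) h)
            = X * s + PowerSeries.C (R := A) h * s := by ring
        rw [this, sig_add, sig_X_mul g hg, sig_C_mul g hg]
        rw [hf]
        ring
      have h3 : sig g F = -(f * sig g s) := by
        rw [← hrs, sig_add, h1, h2, zero_add]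
      rw [h3, map_neg, neg_eq_zero]
      have : (X : A) ^ n ∣ f * sig g s := Dvd.dvd.mul_right hXnf _
      exact X_pow_dvd_iff.mp this k k.2
  -- surjectivity
  have hsurj : Function.Surjective (piMap g n) := by
    intro c
    refine ⟨PowerSeries.C (R := A) (PowerSeries.mk fun k => if hk : k < n then c ⟨k, hk⟩ else 0), ?_⟩
    funext k
    show PowerSeries.coeff (R := ℂ) (k : ℕ) (sig g _) = c k
    rw [sig_C, coeff_mk, dif_pos k.2]
  refine ⟨?_, trivial⟩
  exact ((Submodule.Quotient.restrictScalarsEquiv ℂ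
      (Jgh g h : Submodule B B)).symm.trans
    (Submodule.quotEquivOfEq _ _ hker.symm)).trans
    (LinearMap.quotKerEquivOfSurjective _ hsurj)

end Main

omit hg in
lemma coeff_Phi (F : MvPowerSeries (Fin 2) ℂ) (a b : ℕ) :
    PowerSeries.coeff (R := ℂ) b (PowerSeries.coeff (R := A) a (Phi F)) = F (fs a b) := by
  have hPhi : Phi F = PowerSeries.mk fun a => PowerSeries.mk fun b => F (fs a b) := rfl
  rw [hPhi]
  simp

omit hg in
lemma Phi_X : Phi (MvPowerSeries.X 0) = (X : B) := by
  refine PowerSeries.ext fun a => PowerSeries.ext fun b => ?_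
  rw [coeff_Phi]
  have h1 : (MvPowerSeries.X 0 : MvPowerSeries (Fin 2) ℂ) (fs a b)
      = if fs a b = Finsupp.single 0 1 then 1 else 0 := by
    rw [show (MvPowerSeries.X 0 : MvPowerSeries (Fin 2) ℂ) (fs a b)
        = MvPowerSeries.coeff (R := ℂ) (fs a b) (MvPowerSeries.X 0) from rfl]
    rw [MvPowerSeries.coeff_X]
  have h2 : Finsupp.single (0 : Fin 2) 1 = fs 1 0 := by
    ext i; fin_cases i <;> simp [fs]
  have h3 : (fs a b = fs 1 0) ↔ (a = 1 ∧ b = 0) := by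
    constructor
    · exact fun hyp => fs_inj hyp
    · rintro ⟨rfl, rfl⟩; rfl
  rw [h1, h2]
  rw [PowerSeries.coeff_X, apply_ite (PowerSeries.coeff (R := ℂ) b), PowerSeries.coeff_one, map_zero]
  simp only [h3]
  split_ifs <;> tauto

omit hg in
lemma Phi_toTwoVars (v : A) : Phi (toTwoVars v) = PowerSeries.C (R := A) v := by
  refine PowerSeries.ext fun a => PowerSeries.ext fun b => ?_
  rw [coeff_Phi]
  show (if fs a b 0 = 0 then PowerSeries.coeff (R := ℂ) (fs a b 1) v else 0) = _
  rw [fs_apply0, fs_apply1, PowerSeries.coeff_C, apply_ite (PowerSeries.coeff (R := ℂ) b), map_zero]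

end

noncomputable section

/-- Let `g, h ∈ ℂ⟦Y⟧` have zero constant term and `g ≠ h`, and regard them as elements
`G, H ∈ ℂ⟦X,Y⟧` depending only on `Y`.  Then `ℂ⟦X,Y⟧/(X + G, X + H)` is a
finite-dimensional `ℂ`-vector space whose dimension equals the order of vanishing of
`g − h`. -/
theorem stmt5 (g h : PowerSeries ℂ)
    (hg : PowerSeries.constantCoeff g = 0) (hh : PowerSeries.constantCoeff h = 0)
    (hgh : g ≠ h) :
    FiniteDimensional ℂ
      (MvPowerSeries (Fin 2) ℂ ⧸
        Ideal.span {MvPowerSeries.X 0 + toTwoVars g, MvPowerSeries.X 0 + toTwoVars h}) ∧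
    ((Module.finrank ℂ
      (MvPowerSeries (Fin 2) ℂ ⧸
        Ideal.span {MvPowerSeries.X 0 + toTwoVars g, MvPowerSeries.X 0 + toTwoVars h}) : ℕ∞)
      = (g - h).order) := by
  have hf0 : g - h ≠ 0 := sub_ne_zero.mpr hgh
  obtain ⟨n, hn⟩ : ∃ n : ℕ, (g - h).order = n := by
    have := PowerSeries.order_eq_top.not.mpr hf0
    cases ho : (g - h).order with
    | top => exact absurd ho this
    | coe n => exact ⟨n, rfl⟩
  set I : Ideal (MvPowerSeries (Fin 2) ℂ) :=
    Ideal.span {MvPowerSeries.X 0 + toTwoVars g, MvPowerSeries.X 0 + toTwoVars h} with hI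
  have hIJ : Jgh g h = I.map (Phi : MvPowerSeries (Fin 2) ℂ →+* B) := by
    rw [hI, Ideal.map_span, Set.image_pair, Jgh]
    congr 1
    rw [show ((Phi : MvPowerSeries (Fin 2) ℂ →+* B) (MvPowerSeries.X 0 + toTwoVars g))
        = Phi (MvPowerSeries.X 0 + toTwoVars g) from rfl]
    rw [show ((Phi : MvPowerSeries (Fin 2) ℂ →+* B) (MvPowerSeries.X 0 + toTwoVars h))
        = Phi (MvPowerSeries.X 0 + toTwoVars h) from rfl]
    rw [map_add, map_add, Phi_X, Phi_toTwoVars, Phi_toTwoVars]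
  have Psi := Ideal.quotientEquivAlg I (Jgh g h) Phi hIJ
  obtain ⟨E, -⟩ := main g hg h hh hgh n hn
  have E2 := Psi.toLinearEquiv.trans E
  constructor
  · exact LinearEquiv.finiteDimensional E2.symm
  · rw [E2.finrank_eq, Module.finrank_fin_fun, hn]
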